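/- Fix $j \ge 1$, parameters $a \in \mathbb{R}^j_{>0}$, box bounds $l, u \in \mathbb{R}^j$, and nested bounds $L_k \le U_k$ for $k < j$. For $C \in \mathbb{R}$, let $x^j(C)$ denote the unique optimal solution of the problem: minimize $\sum_{i=1}^j \frac{1}{2} x_i^2/a_i$ subject to $\sum_{i=1}^j x_i = C$, $L_k \le \sum_{i=1}^k x_i \le U_k$ for all $k < j$, and $l_i \le x_i \le u_i$ for all $i \le j$. If $A \le B$ and both QRAP-NC$^j(A)$ and QRAP-NC$^j(B)$ are feasible, then $x^j_i(A) \le x^j_i(B)$ for every $i \le j$. -/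

import Mathlib

/- ### Auxiliary prefix-sum machinery -/

noncomputable def pSum (j : ℕ) (x : Fin j → ℝ) (n : ℕ) : ℝ :=
  ∑ i ∈ Finset.univ.filter (fun i : Fin j => (i : ℕ) < n), x i

lemma pSum_zero {j : ℕ} (x : Fin j → ℝ) : pSum j x 0 = 0 := by
  simp [pSum]

lemma pSum_top {j : ℕ} (x : Fin j → ℝ) : pSum j x j = ∑ i, x i := by
  unfold pSum
  congr 1
  apply Finset.filter_true_of_mem
  intro i _; exact i.isLt

lemma pSum_succ {j : ℕ} (x : Fin j → ℝ) (n : ℕ) (hn : n < j) :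
    pSum j x (n + 1) = pSum j x n + x ⟨n, hn⟩ := by
  unfold pSum
  have : Finset.univ.filter (fun i : Fin j => (i : ℕ) < n + 1)
      = insert ⟨n, hn⟩ (Finset.univ.filter (fun i : Fin j => (i : ℕ) < n)) := by
    ext i
    simp [Nat.lt_succ_iff_lt_or_eq, Fin.ext_iff, or_comm]
    exact Nat.le_iff_lt_or_eq.trans or_comm
  rw [this, Finset.sum_insert (by simp), add_comm]

lemma pSum_Iic {j : ℕ} (x : Fin j → ℝ) (k : Fin j) :
    ∑ i ∈ Finset.Iic k, x i = pSum j x ((k : ℕ) + 1) := by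
  unfold pSum
  congr 1
  ext i
  simp only [Finset.mem_filter, Finset.mem_Iic, Finset.mem_univ, true_and,
    Nat.lt_succ_iff, Fin.le_iff_val_le_val]

lemma pSum_coord {j : ℕ} (x : Fin j → ℝ) (i : Fin j) :
    x i = pSum j x ((i : ℕ) + 1) - pSum j x (i : ℕ) := by
  rw [pSum_succ x (i : ℕ) i.isLt]
  simp

lemma pert_pSum {j : ℕ} (x : Fin j → ℝ) (m i : Fin j) (ε : ℝ) (n : ℕ) :
    pSum j (fun t => x t + (if t = m then ε else 0) - (if t = i then ε else 0)) n
    = pSum j x n + (if (m:ℕ) < n then ε else 0) - (if (i:ℕ) < n then ε else 0) := by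
  unfold pSum
  rw [Finset.sum_sub_distrib, Finset.sum_add_distrib, Finset.sum_ite_eq', Finset.sum_ite_eq']
  simp only [Finset.mem_filter, Finset.mem_univ, true_and]

lemma key_sq (s t s' t' : ℝ) :
    (min s t - min s' t')^2 + (max s t - max s' t')^2 ≤ (s-s')^2 + (t-t')^2 := by
  simp only [min_def, max_def]
  split_ifs <;> nlinarith [sq_nonneg (s-t), sq_nonneg (s'-t')]

lemma minmax_diff (s t s' t' lb ub : ℝ) (h1 : lb ≤ s - s') (h2 : s - s' ≤ ub)
    (h3 : lb ≤ t - t') (h4 : t - t' ≤ ub) :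
    (lb ≤ min s t - min s' t' ∧ min s t - min s' t' ≤ ub) ∧
    (lb ≤ max s t - max s' t' ∧ max s t - max s' t' ≤ ub) := by
  simp only [min_def, max_def]
  split_ifs <;> refine ⟨⟨?_, ?_⟩, ?_, ?_⟩ <;> linarith

/-- Feasibility for the restricted problem QRAP-NC with `n` variables and resource `C`. -/
def qrapncFeas (n : ℕ) (l u L U : Fin n → ℝ) (C : ℝ) (x : Fin n → ℝ) : Prop :=
  (∑ i, x i = C) ∧
  (∀ k : Fin n, (k : ℕ) + 1 < n →
    L k ≤ ∑ i ∈ Finset.Iic k, x i ∧ ∑ i ∈ Finset.Iic k, x i ≤ U k) ∧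
  (∀ i, l i ≤ x i ∧ x i ≤ u i)

/-- Separable quadratic objective of QRAP-NC. -/
noncomputable def qrapObj (n : ℕ) (a x : Fin n → ℝ) : ℝ := ∑ i, (1/2) * (x i)^2 / a i

/-- `x` is an optimal solution of QRAP-NC with `n` variables and resource `C`. -/
def qrapncOpt (n : ℕ) (a l u L U : Fin n → ℝ) (C : ℝ) (x : Fin n → ℝ) : Prop :=
  qrapncFeas n l u L U C x ∧
  ∀ y, qrapncFeas n l u L U C y → qrapObj n a x ≤ qrapObj n a y

/- ### Uniqueness of optimal solutions -/

lemma opt_unique (j : ℕ) (a l u L U : Fin j → ℝ) (C : ℝ) (ha : ∀ i, 0 < a i)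
    (x y : Fin j → ℝ) (hx : qrapncOpt j a l u L U C x) (hy : qrapncOpt j a l u L U C y) :
    x = y := by
  set z : Fin j → ℝ := fun i => (x i + y i)/2 with hz
  have hzfeas : qrapncFeas j l u L U C z := by
    obtain ⟨hx1, hx2, hx3⟩ := hx.1
    obtain ⟨hy1, hy2, hy3⟩ := hy.1
    refine ⟨?_, ?_, ?_⟩
    · simp only [hz]
      rw [show (fun i => (x i + y i)/2) = (fun i => x i/2 + y i/2) by funext i; ring]
      rw [Finset.sum_add_distrib, ← Finset.sum_div, ← Finset.sum_div, hx1, hy1]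
      ring
    · intro k hk
      have e : ∑ i ∈ Finset.Iic k, z i
          = (∑ i ∈ Finset.Iic k, x i)/2 + (∑ i ∈ Finset.Iic k, y i)/2 := by
        simp only [hz]
        rw [← add_div, ← Finset.sum_add_distrib, Finset.sum_div]
      constructor
      · rw [e]; linarith [(hx2 k hk).1, (hy2 k hk).1]
      · rw [e]; linarith [(hx2 k hk).2, (hy2 k hk).2]
    · intro i
      constructor
      · simp only [hz]; linarith [(hx3 i).1, (hy3 i).1]
      · simp only [hz]; linarith [(hx3 i).2, (hy3 i).2]
  have hxy : qrapObj j a x = qrapObj j a y :=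
    le_antisymm (hx.2 y hy.1) (hy.2 x hx.1)
  have hobj : qrapObj j a z
      = (qrapObj j a x + qrapObj j a y)/2 - ∑ i, (x i - y i)^2/(8 * a i) := by
    unfold qrapObj
    rw [← Finset.sum_add_distrib, Finset.sum_div, ← Finset.sum_sub_distrib]
    apply Finset.sum_congr rfl
    intro i _
    have hai := (ha i).ne'
    simp only [hz]
    field_simp
    ring
  have hle : qrapObj j a x ≤ qrapObj j a z := hx.2 z hzfeas
  have hsum : ∑ i, (x i - y i)^2/(8 * a i) ≤ 0 := by
    rw [hobj] at hle; linarith [hxy]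
  have hnn : ∀ i ∈ Finset.univ, (0:ℝ) ≤ (x i - y i)^2/(8 * a i) := by
    intro i _
    have h8 : (0:ℝ) < 8 * a i := by nlinarith [ha i]
    exact div_nonneg (sq_nonneg _) h8.le
  have hzero : ∀ i ∈ Finset.univ, (x i - y i)^2/(8 * a i) = 0 := by
    rw [← Finset.sum_eq_zero_iff_of_nonneg hnn]
    exact le_antisymm hsum (Finset.sum_nonneg hnn)
  funext i
  have h0 := hzero i (Finset.mem_univ i)
  have h8 : (0:ℝ) < 8 * a i := by nlinarith [ha i]
  have h1 : (x i - y i)^2 = 0 := by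
    rcases div_eq_zero_iff.mp h0 with h | h
    · exact h
    · exact absurd h h8.ne'
  have h2 : x i - y i = 0 := pow_eq_zero_iff two_ne_zero |>.mp h1
  linarith

/- ### Lattice structure of feasible sets in prefix-sum space -/

lemma pSum_eq_of {j : ℕ} (P : ℕ → ℝ) (hP0 : P 0 = 0) (w : Fin j → ℝ)
    (hw : ∀ i : Fin j, w i = P ((i : ℕ) + 1) - P (i : ℕ)) :
    ∀ n, n ≤ j → pSum j w n = P n := by
  intro n
  induction n with
  | zero => intro _; rw [pSum_zero, hP0]
  | succ m ih =>
    intro hm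
    have hmj : m < j := hm
    rw [pSum_succ w m hmj, ih (le_of_lt hmj), hw ⟨m, hmj⟩]
    ring

lemma lattice_feas {j : ℕ} (l u L U : Fin j → ℝ) (A B : ℝ) (x y : Fin j → ℝ)
    (hx : qrapncFeas j l u L U A x) (hy : qrapncFeas j l u L U B y) :
    qrapncFeas j l u L U (min A B)
      (fun i => min (pSum j x ((i:ℕ)+1)) (pSum j y ((i:ℕ)+1))
        - min (pSum j x (i:ℕ)) (pSum j y (i:ℕ))) ∧
    qrapncFeas j l u L U (max A B)
      (fun i => max (pSum j x ((i:ℕ)+1)) (pSum j y ((i:ℕ)+1))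
        - max (pSum j x (i:ℕ)) (pSum j y (i:ℕ))) := by
  obtain ⟨hx1, hx2, hx3⟩ := hx
  obtain ⟨hy1, hy2, hy3⟩ := hy
  have hPw : ∀ n, n ≤ j → pSum j (fun i => min (pSum j x ((i:ℕ)+1)) (pSum j y ((i:ℕ)+1))
      - min (pSum j x (i:ℕ)) (pSum j y (i:ℕ))) n = min (pSum j x n) (pSum j y n) := by
    apply pSum_eq_of
    · rw [pSum_zero, pSum_zero]; simp
    · intro i; rfl
  have hPv : ∀ n, n ≤ j → pSum j (fun i => max (pSum j x ((i:ℕ)+1)) (pSum j y ((i:ℕ)+1))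
      - max (pSum j x (i:ℕ)) (pSum j y (i:ℕ))) n = max (pSum j x n) (pSum j y n) := by
    apply pSum_eq_of
    · rw [pSum_zero, pSum_zero]; simp
    · intro i; rfl
  constructor
  · refine ⟨?_, ?_, ?_⟩
    · rw [← pSum_top, hPw j le_rfl, pSum_top, pSum_top, hx1, hy1]
    · intro k hk
      rw [pSum_Iic, hPw ((k:ℕ)+1) (by omega)]
      have hxk := hx2 k hk; have hyk := hy2 k hk
      rw [pSum_Iic] at hxk hyk
      exact ⟨le_min hxk.1 hyk.1, le_trans (min_le_left _ _) hxk.2⟩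
    · intro i
      have h1 := hx3 i; have h2 := hy3 i
      rw [pSum_coord x i] at h1
      rw [pSum_coord y i] at h2
      exact ((minmax_diff _ _ _ _ _ _ h1.1 h1.2 h2.1 h2.2).1)
  · refine ⟨?_, ?_, ?_⟩
    · rw [← pSum_top, hPv j le_rfl, pSum_top, pSum_top, hx1, hy1]
    · intro k hk
      rw [pSum_Iic, hPv ((k:ℕ)+1) (by omega)]
      have hxk := hx2 k hk; have hyk := hy2 k hk
      rw [pSum_Iic] at hxk hyk
      exact ⟨le_trans hxk.1 (le_max_left _ _), max_le hxk.2 hyk.2⟩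
    · intro i
      have h1 := hx3 i; have h2 := hy3 i
      rw [pSum_coord x i] at h1
      rw [pSum_coord y i] at h2
      exact ((minmax_diff _ _ _ _ _ _ h1.1 h1.2 h2.1 h2.2).2)

lemma lattice_obj {j : ℕ} (a x y : Fin j → ℝ) (ha : ∀ i, 0 < a i) :
    qrapObj j a (fun i => min (pSum j x ((i:ℕ)+1)) (pSum j y ((i:ℕ)+1))
        - min (pSum j x (i:ℕ)) (pSum j y (i:ℕ)))
    + qrapObj j a (fun i => max (pSum j x ((i:ℕ)+1)) (pSum j y ((i:ℕ)+1))
        - max (pSum j x (i:ℕ)) (pSum j y (i:ℕ)))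
    ≤ qrapObj j a x + qrapObj j a y := by
  unfold qrapObj
  rw [← Finset.sum_add_distrib, ← Finset.sum_add_distrib]
  apply Finset.sum_le_sum
  intro i _
  have h := key_sq (pSum j x ((i:ℕ)+1)) (pSum j y ((i:ℕ)+1))
    (pSum j x (i:ℕ)) (pSum j y (i:ℕ))
  have hxi := pSum_coord x i
  have hyi := pSum_coord y i
  rw [← hxi, ← hyi] at h
  have hai := ha i
  rw [← add_div, ← add_div, div_le_div_iff₀ hai hai]
  nlinarith [h]

/-- Monotonicity of the optimal prefix sums in the resource value. -/
lemma prefix_mono {j : ℕ} (a l u L U : Fin j → ℝ) (A B : ℝ)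
    (ha : ∀ i, 0 < a i) (hAB : A ≤ B) (xA xB : Fin j → ℝ)
    (hxA : qrapncOpt j a l u L U A xA) (hxB : qrapncOpt j a l u L U B xB) :
    ∀ n, n ≤ j → pSum j xA n ≤ pSum j xB n := by
  obtain ⟨hwf, hvf⟩ := lattice_feas l u L U A B xA xB hxA.1 hxB.1
  rw [min_eq_left hAB] at hwf
  rw [max_eq_right hAB] at hvf
  set w : Fin j → ℝ := fun i => min (pSum j xA ((i:ℕ)+1)) (pSum j xB ((i:ℕ)+1))
        - min (pSum j xA (i:ℕ)) (pSum j xB (i:ℕ)) with hwdef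
  set v : Fin j → ℝ := fun i => max (pSum j xA ((i:ℕ)+1)) (pSum j xB ((i:ℕ)+1))
        - max (pSum j xA (i:ℕ)) (pSum j xB (i:ℕ)) with hvdef
  have h1 : qrapObj j a xA ≤ qrapObj j a w := hxA.2 w hwf
  have h2 : qrapObj j a xB ≤ qrapObj j a v := hxB.2 v hvf
  have h3 := lattice_obj a xA xB ha
  have hfw : qrapObj j a w = qrapObj j a xA := by linarith
  have hwopt : qrapncOpt j a l u L U A w :=
    ⟨hwf, fun z hz => le_trans (le_of_eq hfw) (hxA.2 z hz)⟩
  have heq : xA = w := opt_unique j a l u L U A ha xA w hxA hwopt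
  have hPw : ∀ n, n ≤ j → pSum j w n = min (pSum j xA n) (pSum j xB n) := by
    apply pSum_eq_of
    · rw [pSum_zero, pSum_zero]; simp
    · intro i; rfl
  intro n hn
  have : pSum j xA n = min (pSum j xA n) (pSum j xB n) := by
    conv_lhs => rw [heq]
    exact hPw n hn
  rw [this]
  exact min_le_right _ _

lemma obj_diff {j : ℕ} (a p q : Fin j → ℝ) (m i : Fin j) (hmi : m ≠ i)
    (hagree : ∀ t, t ≠ m → t ≠ i → p t = q t) :
    qrapObj j a p - qrapObj j a q
      = ((1/2)*(p m)^2/a m - (1/2)*(q m)^2/a m)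
        + ((1/2)*(p i)^2/a i - (1/2)*(q i)^2/a i) := by
  unfold qrapObj
  rw [← Finset.sum_sub_distrib]
  have hsub : ∑ t : Fin j, ((1/2)*(p t)^2/a t - (1/2)*(q t)^2/a t)
      = ∑ t ∈ ({m, i} : Finset (Fin j)), ((1/2)*(p t)^2/a t - (1/2)*(q t)^2/a t) := by
    symm
    apply Finset.sum_subset (Finset.subset_univ _)
    intro t _ ht
    simp only [Finset.mem_insert, Finset.mem_singleton] at ht
    push_neg at ht
    rw [hagree t ht.1 ht.2]
    ring
  rw [hsub, Finset.sum_pair hmi]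

set_option maxHeartbeats 2000000 in
theorem stmt_4 (j : ℕ) (hj : 1 ≤ j) (a l u L U : Fin j → ℝ) (A B : ℝ)
    (ha : ∀ i, 0 < a i) (hlu : ∀ i, l i ≤ u i)
    (hLU : ∀ k : Fin j, (k : ℕ) + 1 < j → L k ≤ U k)
    (hAB : A ≤ B)
    (xA xB : Fin j → ℝ)
    (hxA : qrapncOpt j a l u L U A xA)
    (hxB : qrapncOpt j a l u L U B xB) :
    ∀ i, xA i ≤ xB i := by
  classical
  by_contra hcon
  push_neg at hcon
  obtain ⟨i, hi⟩ := hcon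
  have hmono := prefix_mono a l u L U A B ha hAB xA xB hxA hxB
  set D : ℕ → ℝ := fun n => pSum j xB n - pSum j xA n with hD
  have hD0 : D 0 = 0 := by simp [hD, pSum_zero]
  have hDnn : ∀ n, n ≤ j → 0 ≤ D n := fun n hn => sub_nonneg.mpr (hmono n hn)
  have hstep : ∀ (k : Fin j), D ((k:ℕ)+1) = D (k:ℕ) + (xB k - xA k) := by
    intro k
    simp only [hD]
    rw [pSum_succ xB (k:ℕ) k.isLt, pSum_succ xA (k:ℕ) k.isLt]
    simp only [Fin.eta]
    ring
  have hDi : 0 < D (i:ℕ) := by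
    have h1 := hstep i
    have h2 := hDnn ((i:ℕ)+1) i.isLt
    linarith
  -- find the exchange partner m
  have hclaim : ∀ p : ℕ, p ≤ (i:ℕ) → (∀ q, p ≤ q → q ≤ (i:ℕ) → 0 < D q) →
      ∃ m : Fin j, (m:ℕ) < (i:ℕ) ∧ xA m < xB m ∧
        ∀ q, (m:ℕ) < q → q ≤ (i:ℕ) → 0 < D q := by
    intro p
    induction p with
    | zero =>
      intro _ hq
      have := hq 0 le_rfl (Nat.zero_le _)
      rw [hD0] at this
      exact absurd this (lt_irrefl 0)
    | succ p ih =>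
      intro hpi hq
      by_cases hp : 0 < D p
      · refine ih (by omega) ?_
        intro q hq1 hq2
        rcases Nat.eq_or_lt_of_le hq1 with h | h
        · rw [← h]; exact hp
        · exact hq q h hq2
      · have hpj : p < j := by have := i.isLt; omega
        have hDp : D p = 0 := le_antisymm (not_lt.mp hp) (hDnn p (by omega))
        refine ⟨⟨p, hpj⟩, by simpa using (by omega : p < (i:ℕ)), ?_, ?_⟩
        · have h1 := hstep ⟨p, hpj⟩
          have h2 : 0 < D (p+1) := hq (p+1) le_rfl hpi
          simp only at h1
          linarith
        · intro q hq1 hq2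
          simp only at hq1
          exact hq q (by omega) hq2
  obtain ⟨m, hmi, hm, hDq⟩ := hclaim (i:ℕ) le_rfl
    (fun q h1 h2 => by have : q = (i:ℕ) := le_antisymm h2 h1; rw [this]; exact hDi)
  have hmne : m ≠ i := fun h => by rw [h] at hmi; exact lt_irrefl _ hmi
  obtain ⟨hA1, hA2, hA3⟩ := hxA.1
  obtain ⟨hB1, hB2, hB3⟩ := hxB.1
  -- the collection of positive slacks
  set δ : ℝ := (xB m - xA m)/(a m) + (xA i - xB i)/(a i) with hδdef
  have hδ : 0 < δ :=
    add_pos (div_pos (by linarith) (ha m)) (div_pos (by linarith) (ha i))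
  set K : Finset (Fin j) := Finset.univ.filter
    (fun k : Fin j => (m:ℕ) < (k:ℕ)+1 ∧ (k:ℕ)+1 ≤ (i:ℕ) ∧ (k:ℕ)+1 < j) with hK
  set E : Finset ℝ := insert (xA i - xB i) (insert (xB m - xA m)
    (insert (δ / (2 * (1/a m + 1/a i)))
      (K.image (fun k => min (U k - pSum j xA ((k:ℕ)+1)) (pSum j xB ((k:ℕ)+1) - L k)))))
    with hE
  have hEne : E.Nonempty := ⟨_, Finset.mem_insert_self _ _⟩
  set ε := E.min' hEne with hε
  have happos : 0 < 1/a m + 1/a i := by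
    have := ha m; have := ha i; positivity
  have hKslack : ∀ k ∈ K, 0 < U k - pSum j xA ((k:ℕ)+1) ∧ 0 < pSum j xB ((k:ℕ)+1) - L k := by
    intro k hk
    simp only [hK, Finset.mem_filter, Finset.mem_univ, true_and] at hk
    obtain ⟨hk1, hk2, hk3⟩ := hk
    have hDk : 0 < D ((k:ℕ)+1) := hDq ((k:ℕ)+1) hk1 hk2
    have hBk := hB2 k hk3
    have hAk := hA2 k hk3
    rw [pSum_Iic] at hBk hAk
    simp only [hD] at hDk
    constructor
    · linarith [hBk.2]
    · linarith [hAk.1]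
  have hεpos : 0 < ε := by
    rw [hε, Finset.lt_min'_iff]
    intro b hb
    simp only [hE, Finset.mem_insert, Finset.mem_image] at hb
    rcases hb with h | h | h | ⟨k, hk, h⟩
    · rw [h]; linarith
    · rw [h]; linarith
    · rw [h]; positivity
    · rw [← h]
      obtain ⟨hs1, hs2⟩ := hKslack k hk
      exact lt_min hs1 hs2
  have hεle : ∀ b ∈ E, ε ≤ b := fun b hb => Finset.min'_le E b hb
  have hε0 : ε ≤ xA i - xB i := hεle _ (by simp [hE])
  have hε1 : ε ≤ xB m - xA m := hεle _ (by simp [hE])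
  have hε2 : ε ≤ δ / (2 * (1/a m + 1/a i)) := hεle _ (by simp [hE])
  have hεK : ∀ k ∈ K, ε ≤ U k - pSum j xA ((k:ℕ)+1) ∧ ε ≤ pSum j xB ((k:ℕ)+1) - L k := by
    intro k hk
    have hmem : min (U k - pSum j xA ((k:ℕ)+1)) (pSum j xB ((k:ℕ)+1) - L k) ∈ E := by
      simp only [hE, Finset.mem_insert, Finset.mem_image]
      right; right; right
      exact ⟨k, hk, rfl⟩
    have := hεle _ hmem
    exact ⟨le_trans this (min_le_left _ _), le_trans this (min_le_right _ _)⟩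
  clear_value ε δ
  -- the perturbed solutions
  set y' : Fin j → ℝ := fun t => xA t + (if t = m then ε else 0) - (if t = i then ε else 0)
    with hy'def
  set z' : Fin j → ℝ := fun t => xB t + (if t = i then ε else 0) - (if t = m then ε else 0)
    with hz'def
  have hy'm : y' m = xA m + ε := by simp [hy'def, hmne]
  have hy'i : y' i = xA i - ε := by simp [hy'def, Ne.symm hmne]
  have hz'm : z' m = xB m - ε := by simp [hz'def, hmne]
  have hz'i : z' i = xB i + ε := by simp [hz'def, Ne.symm hmne]
  have hy'feas : qrapncFeas j l u L U A y' := by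
    refine ⟨?_, ?_, ?_⟩
    · rw [← pSum_top, hy'def, pert_pSum, if_pos m.isLt, if_pos i.isLt, pSum_top, hA1]
      ring
    · intro k hk
      rw [pSum_Iic, hy'def, pert_pSum]
      have hAk := hA2 k hk
      rw [pSum_Iic] at hAk
      by_cases h1 : (m:ℕ) < (k:ℕ)+1
      · by_cases h2 : (i:ℕ) < (k:ℕ)+1
        · rw [if_pos h1, if_pos h2]
          constructor <;> linarith [hAk.1, hAk.2]
        · rw [if_pos h1, if_neg h2]
          have hkK : k ∈ K := by
            simp only [hK, Finset.mem_filter, Finset.mem_univ, true_and]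
            omega
          have := (hεK k hkK).1
          constructor
          · linarith [hAk.1]
          · linarith
      · have h2 : ¬ (i:ℕ) < (k:ℕ)+1 := by omega
        rw [if_neg h1, if_neg h2]
        constructor <;> linarith [hAk.1, hAk.2]
    · intro t
      by_cases h1 : t = m
      · subst h1
        rw [hy'm]
        constructor
        · linarith [(hA3 t).1]
        · linarith [(hB3 t).2]
      · by_cases h2 : t = i
        · subst h2
          rw [hy'i]
          constructor
          · linarith [(hB3 t).1]
          · linarith [(hA3 t).2]
        · have : y' t = xA t := by simp [hy'def, h1, h2]
          rw [this]
          exact hA3 t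
  have hz'feas : qrapncFeas j l u L U B z' := by
    refine ⟨?_, ?_, ?_⟩
    · rw [← pSum_top, hz'def, pert_pSum, if_pos m.isLt, if_pos i.isLt, pSum_top, hB1]
      ring
    · intro k hk
      rw [pSum_Iic, hz'def, pert_pSum]
      have hBk := hB2 k hk
      rw [pSum_Iic] at hBk
      by_cases h1 : (m:ℕ) < (k:ℕ)+1
      · by_cases h2 : (i:ℕ) < (k:ℕ)+1
        · rw [if_pos h1, if_pos h2]
          constructor <;> linarith [hBk.1, hBk.2]
        · rw [if_neg h2, if_pos h1]
          have hkK : k ∈ K := by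
            simp only [hK, Finset.mem_filter, Finset.mem_univ, true_and]
            omega
          have := (hεK k hkK).2
          constructor
          · linarith
          · linarith [hBk.2]
      · have h2 : ¬ (i:ℕ) < (k:ℕ)+1 := by omega
        rw [if_neg h1, if_neg h2]
        constructor <;> linarith [hBk.1, hBk.2]
    · intro t
      by_cases h1 : t = m
      · subst h1
        rw [hz'm]
        constructor
        · linarith [(hA3 t).1]
        · linarith [(hB3 t).2]
      · by_cases h2 : t = i
        · subst h2
          rw [hz'i]
          constructor
          · linarith [(hB3 t).1]
          · linarith [(hA3 t).2]
        · have : z' t = xB t := by simp [hz'def, h1, h2]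
          rw [this]
          exact hB3 t
  -- the objective strictly improves in total
  have e1 := obj_diff a y' xA m i hmne (fun t h1 h2 => by simp [hy'def, h1, h2])
  have e2 := obj_diff a z' xB m i hmne (fun t h1 h2 => by simp [hz'def, h1, h2])
  have ham := (ha m).ne'
  have hai := (ha i).ne'
  have hkey : (qrapObj j a y' - qrapObj j a xA) + (qrapObj j a z' - qrapObj j a xB)
      = ε * (-δ) + ε^2 * (1/a m + 1/a i) := by
    rw [e1, e2, hy'm, hy'i, hz'm, hz'i, hδdef]
    field_simp
    ring
  have hmul : ε * (2 * (1/a m + 1/a i)) ≤ δ := (le_div_iff₀ (by positivity)).mp hε2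
  have hneg : ε * (-δ) + ε^2 * (1/a m + 1/a i) < 0 := by
    have t1 := mul_le_mul_of_nonneg_left hmul hεpos.le
    have t2 : 0 < ε * δ := mul_pos hεpos hδ
    nlinarith [t1, t2]
  have o1 := hxA.2 y' hy'feas
  have o2 := hxB.2 z' hz'feas
  linarith [hkey, hneg, o1, o2]
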